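/- Let x₀, y₀ ∈ ℕ and let u, p : ℕ × ℕ → [0,∞). Let k ≥ 0 be a constant. If u(x,y) ≤ k + Σ_{s=x₀}^{x−1} Σ_{η=x₀}^{s−1} Σ_{τ=y₀}^{y−1} p(η,τ) u(η,τ) for all x ≥ x₀ and y ≥ y₀, then u(x,y) ≤ k · ∏_{s=x₀}^{x−1} ( 1 + Σ_{η=x₀}^{s−1} Σ_{τ=y₀}^{y−1} p(η,τ) ) for all x ≥ x₀ and y ≥ y₀. -/

import Mathlib

/-- Discrete (𝕋₁ = 𝕋₂ = ℤ) case of Theorem 2.1: a two-variable Gronwall-type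
inequality with an iterated triple sum. -/
theorem stmt_1 (x₀ y₀ : ℕ) (u p : ℕ → ℕ → ℝ) (k : ℝ)
    (hu_nonneg : ∀ x y, 0 ≤ u x y)
    (hp_nonneg : ∀ x y, 0 ≤ p x y)
    (hk : 0 ≤ k)
    (hineq : ∀ x y, x₀ ≤ x → y₀ ≤ y →
      u x y ≤ k + ∑ s ∈ Finset.Ico x₀ x, ∑ η ∈ Finset.Ico x₀ s,
        ∑ τ ∈ Finset.Ico y₀ y, p η τ * u η τ) :
    ∀ x y, x₀ ≤ x → y₀ ≤ y →
      u x y ≤ k * ∏ s ∈ Finset.Ico x₀ x,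
        (1 + ∑ η ∈ Finset.Ico x₀ s, ∑ τ ∈ Finset.Ico y₀ y, p η τ) := by
  intro x y hx hy
  have hBnn : ∀ s, 0 ≤ ∑ η ∈ Finset.Ico x₀ s, ∑ τ ∈ Finset.Ico y₀ y, p η τ :=
    fun s => Finset.sum_nonneg fun _ _ => Finset.sum_nonneg fun _ _ => hp_nonneg _ _
  have key : ∀ n, x₀ ≤ n →
      k + ∑ s ∈ Finset.Ico x₀ n, ∑ η ∈ Finset.Ico x₀ s,
          ∑ τ ∈ Finset.Ico y₀ y, p η τ * u η τ
        ≤ k * ∏ s ∈ Finset.Ico x₀ n,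
          (1 + ∑ η ∈ Finset.Ico x₀ s, ∑ τ ∈ Finset.Ico y₀ y, p η τ) := by
    intro n hn
    induction n, hn using Nat.le_induction with
    | base => simp
    | succ n hn ih =>
      have hWnn : 0 ≤ k * ∏ s ∈ Finset.Ico x₀ n,
          (1 + ∑ η ∈ Finset.Ico x₀ s, ∑ τ ∈ Finset.Ico y₀ y, p η τ) :=
        mul_nonneg hk (Finset.prod_nonneg fun s _ => by have := hBnn s; linarith)
      rw [Finset.sum_Ico_succ_top hn, Finset.prod_Ico_succ_top hn]
      set W := k * ∏ s ∈ Finset.Ico x₀ n,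
          (1 + ∑ η ∈ Finset.Ico x₀ s, ∑ τ ∈ Finset.Ico y₀ y, p η τ) with hW
      have hT : ∑ η ∈ Finset.Ico x₀ n, ∑ τ ∈ Finset.Ico y₀ y, p η τ * u η τ
          ≤ (∑ η ∈ Finset.Ico x₀ n, ∑ τ ∈ Finset.Ico y₀ y, p η τ) * W := by
        rw [Finset.sum_mul]
        refine Finset.sum_le_sum fun η hη => ?_
        rw [Finset.sum_mul]
        refine Finset.sum_le_sum fun τ hτ => ?_
        obtain ⟨hη1, hη2⟩ := Finset.mem_Ico.1 hη
        obtain ⟨hτ1, hτ2⟩ := Finset.mem_Ico.1 hτ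
        have hu : u η τ ≤ W := by
          refine le_trans (hineq η τ hη1 hτ1) (le_trans ?_ ih)
          refine add_le_add_right ?_ k
          refine le_trans (Finset.sum_le_sum fun s _ => Finset.sum_le_sum
            fun η' _ => Finset.sum_le_sum_of_subset_of_nonneg
              (Finset.Ico_subset_Ico le_rfl hτ2.le)
              fun _ _ _ => mul_nonneg (hp_nonneg _ _) (hu_nonneg _ _)) ?_
          refine Finset.sum_le_sum_of_subset_of_nonneg
            (Finset.Ico_subset_Ico le_rfl hη2.le)
            fun _ _ _ => Finset.sum_nonneg fun _ _ => Finset.sum_nonneg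
              fun _ _ => mul_nonneg (hp_nonneg _ _) (hu_nonneg _ _)
        exact mul_le_mul_of_nonneg_left hu (hp_nonneg _ _)
      have hBn := hBnn n
      nlinarith [ih]
  calc u x y ≤ _ := hineq x y hx hy
    _ ≤ _ := key x hx
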